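/- Let Δ := 1 − (1/2)·max_{m∈{1,…,d}}(Σ_{j=1}^{m−1}|1 + e^{iγ_{j,m}}| + Σ_{j=m+1}^{d}|1 + e^{iγ_{m,j}}|) and assume Δ ≥ 0. Then for every k ∈ ℝ^d, ε ∈ ℝ^d: inf over v ∈ ℂ^{2^d} with ‖v‖ = 1 of ‖E(ε,γ)(k)·v‖ is at least Δ^{1/2} · (1/2)·min_{j∈{1,…,d}} t_j · (Σ_{l=1}^{d} |1 + e^{i(π/L)ε_l − i k_l}|²)^{1/2}. -/

import Mathlib

open Matrix

noncomputable def Umat : (n : ℕ) → (Fin n → ℝ) → Matrix (Fin (2 ^ n)) (Fin (2 ^ n)) ℂ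
  | 0, _ => 1
  | n + 1, ξ =>
      (Matrix.reindex (finSumFinEquiv.trans (finCongr (by rw [pow_succ, mul_two])))
        (finSumFinEquiv.trans (finCongr (by rw [pow_succ, mul_two]))))
        (Matrix.fromBlocks (Umat n fun j => ξ j.castSucc) 0 0
          (Complex.exp (Complex.I * (ξ (Fin.last n) : ℂ)) • Umat n fun j => ξ j.castSucc))

/-- The recursively defined hopping matrix `M_n((a_j), (γ_{j,k}))`; only the entries
`γ j k` with `j < k` are relevant. -/
noncomputable def Mmat : (n : ℕ) → (Fin n → ℂ) → (Fin n → Fin n → ℝ) →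
    Matrix (Fin (2 ^ n)) (Fin (2 ^ n)) ℂ
  | 0, _, _ => 0
  | n + 1, a, γ =>
      (Matrix.reindex (finSumFinEquiv.trans (finCongr (by rw [pow_succ, mul_two])))
        (finSumFinEquiv.trans (finCongr (by rw [pow_succ, mul_two]))))
        (Matrix.fromBlocks
          (Mmat n (fun j => a j.castSucc) fun j k => γ j.castSucc k.castSucc)
          (a (Fin.last n) • Umat n fun j => γ j.castSucc (Fin.last n))
          ((starRingEnd ℂ) (a (Fin.last n)) • (Umat n fun j => γ j.castSucc (Fin.last n))ᴴ)
          (Mmat n (fun j => a j.castSucc) fun j k => γ j.castSucc k.castSucc))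

/-- The matrix `E(ε,γ)(k) := M_d((t_j (1+e^{i(π/L)ε_j - i k_j}) (1/2)^{[L=1]})_j, -γ)`. -/
noncomputable def Emat (d L : ℕ) (t : Fin d → ℝ) (ε : Fin d → ℝ) (γ : Fin d → Fin d → ℝ)
    (k : Fin d → ℝ) : Matrix (Fin (2 ^ d)) (Fin (2 ^ d)) ℂ :=
  Mmat d
    (fun j => (t j : ℂ) *
      (1 + Complex.exp (Complex.I * Complex.ofReal (Real.pi / (L : ℝ) * ε j - k j))) *
      (if L = 1 then (1 / 2 : ℂ) else 1))
    (fun j l => -γ j l)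



namespace EmatAux

noncomputable def cc (x : ℝ) : ℝ := ‖1 + Complex.exp (Complex.I * x)‖

lemma cc_nonneg (x : ℝ) : 0 ≤ cc x := norm_nonneg _

lemma cc_neg (x : ℝ) : cc (-x) = cc x := by
  have h : (1 : ℂ) + Complex.exp (Complex.I * ((-x : ℝ) : ℂ)) =
      (starRingEnd ℂ) (1 + Complex.exp (Complex.I * (x : ℂ))) := by
    simp only [map_add, _root_.map_one, ← Complex.exp_conj, _root_.map_mul, Complex.conj_I,
      Complex.conj_ofReal, Complex.ofReal_neg]
    ring_nf
  unfold cc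
  rw [h, Complex.norm_conj]

noncomputable def Nsq {ι : Type*} [Fintype ι] (v : ι → ℂ) : ℝ := ∑ i, Complex.normSq (v i)

lemma Nsq_nonneg {ι : Type*} [Fintype ι] (v : ι → ℂ) : 0 ≤ Nsq v :=
  Finset.sum_nonneg fun _ _ => Complex.normSq_nonneg _

def toE {ι : Type*} [Fintype ι] (v : ι → ℂ) : EuclideanSpace ℂ ι := WithLp.toLp 2 v

lemma norm_toE {ι : Type*} [Fintype ι] (v : ι → ℂ) : ‖toE v‖ = Real.sqrt (Nsq v) := by
  rw [EuclideanSpace.norm_eq]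
  congr 1
  refine Finset.sum_congr rfl fun i _ => ?_
  rw [show (toE v) i = v i from rfl, Complex.sq_norm]

lemma sqrt_Nsq_add_le {ι : Type*} [Fintype ι] (x y : ι → ℂ) :
    Real.sqrt (Nsq (x + y)) ≤ Real.sqrt (Nsq x) + Real.sqrt (Nsq y) := by
  rw [← norm_toE, ← norm_toE, ← norm_toE]
  exact norm_add_le (toE x) (toE y)

noncomputable def IP {ι : Type*} [Fintype ι] (x y : ι → ℂ) : ℂ :=
  ∑ i, (starRingEnd ℂ) (x i) * y i

lemma abs_IP_le {ι : Type*} [Fintype ι] (x y : ι → ℂ) :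
    ‖IP x y‖ ≤ Real.sqrt (Nsq x) * Real.sqrt (Nsq y) := by
  have h := norm_inner_le_norm (𝕜 := ℂ) (toE x) (toE y)
  rw [norm_toE, norm_toE] at h
  have : (inner ℂ (toE x) (toE y) : ℂ) = IP x y := by
    rw [PiLp.inner_apply]
    exact Finset.sum_congr rfl fun i _ => mul_comm _ _
  rwa [this] at h

lemma Nsq_add {ι : Type*} [Fintype ι] (x y : ι → ℂ) :
    Nsq (x + y) = Nsq x + Nsq y + 2 * (IP x y).re := by
  unfold Nsq IP
  rw [Complex.re_sum, Finset.mul_sum, ← Finset.sum_add_distrib, ← Finset.sum_add_distrib]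
  refine Finset.sum_congr rfl fun i _ => ?_
  rw [show (x + y) i = x i + y i from rfl, Complex.normSq_add]
  congr 1
  have : ((starRingEnd ℂ) (x i) * y i).re = (x i * (starRingEnd ℂ) (y i)).re := by
    simp only [Complex.mul_re, Complex.conj_re, Complex.conj_im]
    ring
  rw [this]

lemma Nsq_smul {ι : Type*} [Fintype ι] (z : ℂ) (v : ι → ℂ) :
    Nsq (z • v) = Complex.normSq z * Nsq v := by
  unfold Nsq
  rw [Finset.mul_sum]
  exact Finset.sum_congr rfl fun i _ => by
    rw [Pi.smul_apply, smul_eq_mul, Complex.normSq_mul]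

lemma Nsq_sum_elim {ι κ : Type*} [Fintype ι] [Fintype κ] (x : ι → ℂ) (y : κ → ℂ) :
    Nsq (Sum.elim x y) = Nsq x + Nsq y := by
  unfold Nsq
  rw [Fintype.sum_sum_type]
  rfl

lemma Nsq_comp_equiv {ι κ : Type*} [Fintype ι] [Fintype κ] (e : ι ≃ κ) (v : κ → ℂ) :
    Nsq (v ∘ e) = Nsq v := by
  unfold Nsq
  exact Equiv.sum_comp e (fun i => Complex.normSq (v i))

lemma IP_mulVec_left {ι : Type*} [Fintype ι] (A : Matrix ι ι ℂ) (x y : ι → ℂ) :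
    IP (A.mulVec x) y = IP x (Aᴴ.mulVec y) := by
  have h1 : IP (A.mulVec x) y = star (A.mulVec x) ⬝ᵥ y := rfl
  have h2 : IP x (Aᴴ.mulVec y) = star x ⬝ᵥ (Aᴴ.mulVec y) := rfl
  rw [h1, h2, Matrix.star_mulVec, Matrix.dotProduct_mulVec]

lemma IP_smul_right {ι : Type*} [Fintype ι] (z : ℂ) (x y : ι → ℂ) :
    IP x (z • y) = z * IP x y := by
  unfold IP
  rw [Finset.mul_sum]
  exact Finset.sum_congr rfl fun i _ => by rw [Pi.smul_apply, smul_eq_mul]; ring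

lemma IP_conj_smul_left {ι : Type*} [Fintype ι] (z : ℂ) (x y : ι → ℂ) :
    IP ((starRingEnd ℂ) z • x) y = z * IP x y := by
  unfold IP
  rw [Finset.mul_sum]
  exact Finset.sum_congr rfl fun i _ => by
    rw [Pi.smul_apply, smul_eq_mul, _root_.map_mul, Complex.conj_conj]; ring

lemma IP_add_right {ι : Type*} [Fintype ι] (x y z : ι → ℂ) :
    IP x (y + z) = IP x y + IP x z := by
  unfold IP
  rw [← Finset.sum_add_distrib]
  exact Finset.sum_congr rfl fun i _ => by rw [show (y + z) i = y i + z i from rfl]; ring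

end EmatAux

namespace EmatAux
open EmatAux

lemma Nsq_reindex_mulVec {N K : ℕ} (e : (Fin N ⊕ Fin N) ≃ Fin K)
    (A : Matrix (Fin N ⊕ Fin N) (Fin N ⊕ Fin N) ℂ) (v : Fin K → ℂ) :
    Nsq ((Matrix.reindex e e A).mulVec v) = Nsq (A.mulVec (v ∘ e)) := by
  rw [Matrix.reindex_apply, Matrix.submatrix_mulVec_equiv A v (⇑e.symm) e.symm]
  rw [show v ∘ ⇑e.symm.symm = v ∘ ⇑e from rfl]
  exact Nsq_comp_equiv e.symm _

lemma Nsq_diag_mulVec {ι : Type*} [Fintype ι] [DecidableEq ι] (u : ι → ℂ)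
    (hu : ∀ i, Complex.normSq (u i) = 1) (w : ι → ℂ) :
    Nsq ((Matrix.diagonal u).mulVec w) = Nsq w := by
  unfold Nsq
  refine Finset.sum_congr rfl fun i _ => ?_
  rw [Matrix.mulVec_diagonal, Complex.normSq_mul, hu, one_mul]

lemma Umat_isDiag (n : ℕ) (ξ : Fin n → ℝ) :
    ∃ u : Fin (2 ^ n) → ℂ, (∀ i, Complex.normSq (u i) = 1) ∧ Umat n ξ = Matrix.diagonal u := by
  induction n with
  | zero =>
    exact ⟨fun _ => 1, fun i => by simp, by rw [Umat, Matrix.diagonal_one]⟩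
  | succ n ih =>
    obtain ⟨u, hu, hU⟩ := ih (fun j => ξ j.castSucc)
    set ε := Complex.exp (Complex.I * (ξ (Fin.last n) : ℂ)) with hε
    have hεn : Complex.normSq ε = 1 := by
      rw [hε, ← Complex.sq_norm, Complex.norm_exp]
      simp [Complex.mul_re]
    have key : ∀ x : Fin (2 ^ n) ⊕ Fin (2 ^ n),
        Complex.normSq (Sum.elim u (fun j => ε * u j) x) = 1 := by
      rintro (j | j)
      · simpa using hu j
      · simp only [Sum.elim_inr]
        rw [Complex.normSq_mul, hεn, hu, one_mul]
    refine ⟨fun i => Sum.elim u (fun j => ε * u j)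
      ((finSumFinEquiv.trans (finCongr (by rw [pow_succ, mul_two]))).symm i),
      fun i => key _, ?_⟩
    · rw [Umat, hU]
      rw [show ε • Matrix.diagonal u = Matrix.diagonal (fun j => ε * u j) by
        rw [← Matrix.diagonal_smul]; rfl]
      rw [Matrix.fromBlocks_diagonal, Matrix.reindex_apply, Matrix.submatrix_diagonal_equiv]
      rfl

lemma Mmat_isHermitian (n : ℕ) (a : Fin n → ℂ) (γ : Fin n → Fin n → ℝ) :
    (Mmat n a γ).IsHermitian := by
  induction n with
  | zero => rw [Mmat]; exact Matrix.isHermitian_zero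
  | succ n ih =>
    rw [Mmat]
    rw [Matrix.reindex_apply]
    apply Matrix.IsHermitian.submatrix
    refine Matrix.IsHermitian.fromBlocks (ih _ _) ?_ (ih _ _)
    rw [Matrix.conjTranspose_smul]
    rfl

end EmatAux
namespace EmatAux

lemma reindex_reindex_mul {N K : ℕ} (e : (Fin N ⊕ Fin N) ≃ Fin K)
    (A B : Matrix (Fin N ⊕ Fin N) (Fin N ⊕ Fin N) ℂ) :
    (Matrix.reindex e e A) * (Matrix.reindex e e B) = Matrix.reindex e e (A * B) := by
  rw [Matrix.reindex_apply, Matrix.reindex_apply, Matrix.reindex_apply,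
    Matrix.submatrix_mul_equiv A B _ e.symm _]

lemma reindex_add {N K : ℕ} (e : (Fin N ⊕ Fin N) ≃ Fin K)
    (A B : Matrix (Fin N ⊕ Fin N) (Fin N ⊕ Fin N) ℂ) :
    (Matrix.reindex e e A) + (Matrix.reindex e e B) = Matrix.reindex e e (A + B) := by
  ext i j
  simp [Matrix.reindex_apply, Matrix.submatrix_apply]

lemma anticomm_step {N K : ℕ} (e : (Fin N ⊕ Fin N) ≃ Fin K)
    (M U U' : Matrix (Fin N) (Fin N) ℂ) (u u' : Fin N → ℂ)
    (hu : ∀ i, Complex.normSq (u i) = 1) (hu' : ∀ i, Complex.normSq (u' i) = 1)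
    (hUd : U = Matrix.diagonal u) (hU'd : U' = Matrix.diagonal u')
    (α ε : ℂ) (hε : Complex.normSq ε = 1) (s : ℝ) (hs : 0 ≤ s)
    (hIH : ∀ x : Fin N → ℂ, Real.sqrt (Nsq ((M * U + U * M).mulVec x)) ≤ s * Real.sqrt (Nsq x))
    (v : Fin K → ℂ) :
    Real.sqrt (Nsq (((Matrix.reindex e e
          (Matrix.fromBlocks M (α • U') ((starRingEnd ℂ) α • U'ᴴ) M)) *
        (Matrix.reindex e e (Matrix.fromBlocks U 0 0 (ε • U))) +
        (Matrix.reindex e e (Matrix.fromBlocks U 0 0 (ε • U))) *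
        (Matrix.reindex e e
          (Matrix.fromBlocks M (α • U') ((starRingEnd ℂ) α • U'ᴴ) M))).mulVec v))
      ≤ (s + ‖α‖ * ‖1 + ε‖) * Real.sqrt (Nsq v) := by
  have hblocks :
      Matrix.fromBlocks M (α • U') ((starRingEnd ℂ) α • U'ᴴ) M *
          Matrix.fromBlocks U 0 0 (ε • U) +
        Matrix.fromBlocks U 0 0 (ε • U) *
          Matrix.fromBlocks M (α • U') ((starRingEnd ℂ) α • U'ᴴ) M =
      Matrix.fromBlocks (M * U + U * M)
        ((α * (1 + ε)) • Matrix.diagonal (fun i => u' i * u i))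
        (((starRingEnd ℂ) α * (1 + ε)) •
          Matrix.diagonal (fun i => (starRingEnd ℂ) (u' i) * u i))
        (ε • (M * U + U * M)) := by
    rw [Matrix.fromBlocks_multiply, Matrix.fromBlocks_multiply, Matrix.fromBlocks_add,
      Matrix.fromBlocks_inj]
    refine ⟨by simp, ?_, ?_, ?_⟩
    · rw [hUd, hU'd]
      simp only [Matrix.smul_mul, Matrix.mul_smul, Matrix.diagonal_mul_diagonal,
        Matrix.mul_zero, Matrix.zero_mul, zero_add, add_zero, smul_smul, smul_zero]
      rw [congrArg Matrix.diagonal (funext fun i => mul_comm (u i) (u' i))]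
      rw [← add_smul]
      congr 1
      ring
    · rw [hUd, hU'd, Matrix.diagonal_conjTranspose]
      simp only [Matrix.smul_mul, Matrix.mul_smul, Matrix.diagonal_mul_diagonal,
        Matrix.mul_zero, Matrix.zero_mul, zero_add, add_zero, smul_smul, smul_zero]
      rw [congrArg Matrix.diagonal (show (fun i => u i * star u' i) =
          fun i => (starRingEnd ℂ) (u' i) * u i from
        funext fun i => by simp [Pi.star_apply, Complex.star_def]; ring)]
      rw [congrArg Matrix.diagonal (show (fun i => star u' i * u i) =
          fun i => (starRingEnd ℂ) (u' i) * u i from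
        funext fun i => by simp [Pi.star_apply, Complex.star_def])]
      rw [← add_smul]
      congr 1
      ring
    · simp only [Matrix.smul_mul, Matrix.mul_smul, Matrix.mul_zero, Matrix.zero_mul,
        zero_add, add_zero, smul_add, smul_zero]
  rw [reindex_reindex_mul, reindex_reindex_mul, reindex_add, Nsq_reindex_mulVec, hblocks,
    Matrix.fromBlocks_mulVec]
  set w₁ := (v ∘ ⇑e) ∘ Sum.inl with hw1
  set w₂ := (v ∘ ⇑e) ∘ Sum.inr with hw2
  set A := M * U + U * M with hA
  have hT : Nsq w₁ + Nsq w₂ = Nsq v := by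
    rw [← Nsq_sum_elim, hw1, hw2, Sum.elim_comp_inl_inr, Nsq_comp_equiv]
  have hsum : (A.mulVec w₁ + ((α * (1 + ε)) •
        Matrix.diagonal (fun i => u' i * u i)).mulVec w₂) ⊕ᵥ
      ((((starRingEnd ℂ) α * (1 + ε)) •
        Matrix.diagonal (fun i => (starRingEnd ℂ) (u' i) * u i)).mulVec w₁ +
        (ε • A).mulVec w₂) =
      Sum.elim (A.mulVec w₁) ((ε • A).mulVec w₂) +
      Sum.elim (((α * (1 + ε)) • Matrix.diagonal (fun i => u' i * u i)).mulVec w₂)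
        ((((starRingEnd ℂ) α * (1 + ε)) •
          Matrix.diagonal (fun i => (starRingEnd ℂ) (u' i) * u i)).mulVec w₁) := by
    funext x
    cases x <;> simp [add_comm]
  rw [hsum]
  refine le_trans (sqrt_Nsq_add_le _ _) ?_
  rw [Nsq_sum_elim, Nsq_sum_elim]
  -- first piece
  have hNA1 : Nsq (A.mulVec w₁) ≤ s ^ 2 * Nsq w₁ := by
    have h := mul_self_le_mul_self (Real.sqrt_nonneg _) (hIH w₁)
    rw [Real.mul_self_sqrt (Nsq_nonneg _)] at h
    calc Nsq (A.mulVec w₁) ≤ s * Real.sqrt (Nsq w₁) * (s * Real.sqrt (Nsq w₁)) := h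
      _ = s ^ 2 * (Real.sqrt (Nsq w₁) * Real.sqrt (Nsq w₁)) := by ring
      _ = s ^ 2 * Nsq w₁ := by rw [Real.mul_self_sqrt (Nsq_nonneg _)]
  have hNA2 : Nsq ((ε • A).mulVec w₂) ≤ s ^ 2 * Nsq w₂ := by
    rw [Matrix.smul_mulVec, Nsq_smul, hε, one_mul]
    have h := mul_self_le_mul_self (Real.sqrt_nonneg _) (hIH w₂)
    rw [Real.mul_self_sqrt (Nsq_nonneg _)] at h
    calc Nsq (A.mulVec w₂) ≤ s * Real.sqrt (Nsq w₂) * (s * Real.sqrt (Nsq w₂)) := h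
      _ = s ^ 2 * (Real.sqrt (Nsq w₂) * Real.sqrt (Nsq w₂)) := by ring
      _ = s ^ 2 * Nsq w₂ := by rw [Real.mul_self_sqrt (Nsq_nonneg _)]
  have hfirst : Real.sqrt (Nsq (A.mulVec w₁) + Nsq ((ε • A).mulVec w₂)) ≤
      s * Real.sqrt (Nsq v) := by
    have hmid : Nsq (A.mulVec w₁) + Nsq ((ε • A).mulVec w₂) ≤ s ^ 2 * Nsq v := by
      rw [← hT]
      nlinarith [hNA1, hNA2]
    refine le_trans (Real.sqrt_le_sqrt hmid) ?_
    rw [Real.sqrt_mul (sq_nonneg s), Real.sqrt_sq hs]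
  -- second piece
  have hdiag1 : ∀ i, Complex.normSq (u' i * u i) = 1 := fun i => by
    rw [Complex.normSq_mul, hu, hu', one_mul]
  have hdiag2 : ∀ i, Complex.normSq ((starRingEnd ℂ) (u' i) * u i) = 1 := fun i => by
    rw [Complex.normSq_mul, Complex.normSq_conj, hu, hu', one_mul]
  have hB : Nsq (((α * (1 + ε)) • Matrix.diagonal (fun i => u' i * u i)).mulVec w₂) =
      (‖α‖ * ‖1 + ε‖) ^ 2 * Nsq w₂ := by
    rw [Matrix.smul_mulVec, Nsq_smul, Nsq_diag_mulVec _ hdiag1]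
    congr 1
    rw [Complex.normSq_mul, ← Complex.sq_norm, ← Complex.sq_norm]
    ring
  have hC : Nsq ((((starRingEnd ℂ) α * (1 + ε)) •
      Matrix.diagonal (fun i => (starRingEnd ℂ) (u' i) * u i)).mulVec w₁) =
      (‖α‖ * ‖1 + ε‖) ^ 2 * Nsq w₁ := by
    rw [Matrix.smul_mulVec, Nsq_smul, Nsq_diag_mulVec _ hdiag2]
    congr 1
    rw [Complex.normSq_mul, Complex.normSq_conj, ← Complex.sq_norm, ← Complex.sq_norm]
    ring
  have hm : 0 ≤ ‖α‖ * ‖1 + ε‖ :=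
    mul_nonneg (norm_nonneg _) (norm_nonneg _)
  have hsecond : Real.sqrt (Nsq (((α * (1 + ε)) •
      Matrix.diagonal (fun i => u' i * u i)).mulVec w₂) +
      Nsq ((((starRingEnd ℂ) α * (1 + ε)) •
        Matrix.diagonal (fun i => (starRingEnd ℂ) (u' i) * u i)).mulVec w₁)) ≤
      (‖α‖ * ‖1 + ε‖) * Real.sqrt (Nsq v) := by
    have hmid2 : Nsq (((α * (1 + ε)) •
        Matrix.diagonal (fun i => u' i * u i)).mulVec w₂) +
        Nsq ((((starRingEnd ℂ) α * (1 + ε)) •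
          Matrix.diagonal (fun i => (starRingEnd ℂ) (u' i) * u i)).mulVec w₁) =
        (‖α‖ * ‖1 + ε‖) ^ 2 * Nsq v := by
      rw [hB, hC, ← hT]
      ring
    rw [hmid2, Real.sqrt_mul (sq_nonneg _), Real.sqrt_sq hm]
  calc Real.sqrt (Nsq (A.mulVec w₁) + Nsq ((ε • A).mulVec w₂)) +
        Real.sqrt (Nsq (((α * (1 + ε)) •
          Matrix.diagonal (fun i => u' i * u i)).mulVec w₂) +
          Nsq ((((starRingEnd ℂ) α * (1 + ε)) •
            Matrix.diagonal (fun i => (starRingEnd ℂ) (u' i) * u i)).mulVec w₁))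
      ≤ s * Real.sqrt (Nsq v) +
        (‖α‖ * ‖1 + ε‖) * Real.sqrt (Nsq v) :=
      add_le_add hfirst hsecond
    _ = (s + ‖α‖ * ‖1 + ε‖) * Real.sqrt (Nsq v) := by ring

lemma anticomm_bound : ∀ (n : ℕ) (a : Fin n → ℂ) (γ : Fin n → Fin n → ℝ) (ξ : Fin n → ℝ)
    (v : Fin (2 ^ n) → ℂ),
    Real.sqrt (Nsq ((Mmat n a γ * Umat n ξ + Umat n ξ * Mmat n a γ).mulVec v)) ≤
      (∑ j, ‖a j‖ * cc (ξ j)) * Real.sqrt (Nsq v) := by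
  intro n
  induction n with
  | zero =>
    intro a γ ξ v
    simp [Mmat, Nsq]
  | succ n ih =>
    intro a γ ξ v
    obtain ⟨u, hu, hUd⟩ := Umat_isDiag n (fun j => ξ j.castSucc)
    obtain ⟨u', hu', hU'd⟩ := Umat_isDiag n (fun j => γ j.castSucc (Fin.last n))
    have hε : Complex.normSq (Complex.exp (Complex.I * (ξ (Fin.last n) : ℂ))) = 1 := by
      rw [← Complex.sq_norm, Complex.norm_exp]
      simp [Complex.mul_re]
    have hs : 0 ≤ ∑ j : Fin n, ‖a j.castSucc‖ * cc (ξ j.castSucc) :=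
      Finset.sum_nonneg fun j _ => mul_nonneg (norm_nonneg _) (cc_nonneg _)
    have step := anticomm_step
      (e := finSumFinEquiv.trans (finCongr (by rw [pow_succ, mul_two])))
      (Mmat n (fun j => a j.castSucc) (fun j k => γ j.castSucc k.castSucc))
      (Umat n (fun j => ξ j.castSucc))
      (Umat n (fun j => γ j.castSucc (Fin.last n)))
      u u' hu hu' hUd hU'd (a (Fin.last n)) _ hε _ hs
      (fun x => ih (fun j => a j.castSucc) (fun j k => γ j.castSucc k.castSucc)
        (fun j => ξ j.castSucc) x) v
    rw [Fin.sum_univ_castSucc]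
    simp only [Mmat, Umat]
    exact step

end EmatAux
namespace EmatAux

lemma main_step {N K : ℕ} (e : (Fin N ⊕ Fin N) ≃ Fin K)
    (M U' : Matrix (Fin N) (Fin N) ℂ) (u' : Fin N → ℂ)
    (hu' : ∀ i, Complex.normSq (u' i) = 1) (hU'd : U' = Matrix.diagonal u')
    (hM : M.IsHermitian) (α : ℂ) (S C s : ℝ) (hs : 0 ≤ s)
    (hIH : ∀ x : Fin N → ℂ, (S - C) * Nsq x ≤ Nsq (M.mulVec x))
    (hAC : ∀ x : Fin N → ℂ,
      Real.sqrt (Nsq ((M * U' + U' * M).mulVec x)) ≤ s * Real.sqrt (Nsq x))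
    (v : Fin K → ℂ) :
    (S + ‖α‖ ^ 2 - (C + ‖α‖ * s)) * Nsq v ≤
      Nsq ((Matrix.reindex e e
        (Matrix.fromBlocks M (α • U') ((starRingEnd ℂ) α • U'ᴴ) M)).mulVec v) := by
  rw [Nsq_reindex_mulVec, Matrix.fromBlocks_mulVec, Nsq_sum_elim]
  set w₁ := (v ∘ ⇑e) ∘ Sum.inl with hw1
  set w₂ := (v ∘ ⇑e) ∘ Sum.inr with hw2
  have hT : Nsq v = Nsq w₁ + Nsq w₂ := by
    rw [← Nsq_sum_elim, hw1, hw2, Sum.elim_comp_inl_inr, Nsq_comp_equiv]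
  rw [Nsq_add, Nsq_add]
  have hstar : ∀ i, Complex.normSq (star u' i) = 1 := fun i => by
    rw [Pi.star_apply, Complex.star_def, Complex.normSq_conj]
    exact hu' i
  have e1 : Nsq ((α • U').mulVec w₂) = Complex.normSq α * Nsq w₂ := by
    rw [Matrix.smul_mulVec, Nsq_smul, hU'd, Nsq_diag_mulVec _ hu']
  have e2 : Nsq (((starRingEnd ℂ) α • U'ᴴ).mulVec w₁) = Complex.normSq α * Nsq w₁ := by
    rw [Matrix.smul_mulVec, Nsq_smul, hU'd, Matrix.diagonal_conjTranspose,
      Nsq_diag_mulVec _ hstar, Complex.normSq_conj]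
  have e3 : IP (M.mulVec w₁) ((α • U').mulVec w₂) =
      α * IP w₁ ((M * U').mulVec w₂) := by
    rw [Matrix.smul_mulVec, IP_smul_right, IP_mulVec_left, hM.eq,
      Matrix.mulVec_mulVec]
  have e4 : IP (((starRingEnd ℂ) α • U'ᴴ).mulVec w₁) (M.mulVec w₂) =
      α * IP w₁ ((U' * M).mulVec w₂) := by
    rw [Matrix.smul_mulVec, IP_conj_smul_left, IP_mulVec_left,
      Matrix.conjTranspose_conjTranspose, Matrix.mulVec_mulVec]
  rw [e1, e2, e3, e4]
  set z := IP w₁ ((M * U' + U' * M).mulVec w₂) with hz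
  have e6 : (α * IP w₁ ((M * U').mulVec w₂)).re + (α * IP w₁ ((U' * M).mulVec w₂)).re =
      (α * z).re := by
    rw [← Complex.add_re, ← mul_add, ← IP_add_right, hz, Matrix.add_mulVec]
  have hzb : ‖z‖ ≤ Real.sqrt (Nsq w₁) * (s * Real.sqrt (Nsq w₂)) := by
    refine le_trans (abs_IP_le _ _) ?_
    exact mul_le_mul_of_nonneg_left (hAC w₂) (Real.sqrt_nonneg _)
  have hre : -(‖α‖ * ‖z‖) ≤ (α * z).re := by
    have h1 : ‖α * z‖ = ‖α‖ * ‖z‖ := norm_mul _ _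
    have h2 := Complex.abs_re_le_norm (α * z)
    have h3 := neg_abs_le ((α * z).re)
    rw [h1] at h2
    cases abs_cases ((α * z).re) with
    | inl h => linarith [h.1]
    | inr h => linarith [h.1]
  have h2sqrt : 2 * (Real.sqrt (Nsq w₁) * Real.sqrt (Nsq w₂)) ≤ Nsq w₁ + Nsq w₂ := by
    nlinarith [Real.sq_sqrt (Nsq_nonneg w₁), Real.sq_sqrt (Nsq_nonneg w₂),
      two_mul_le_add_sq (Real.sqrt (Nsq w₁)) (Real.sqrt (Nsq w₂))]
  have hcross : -(‖α‖ * s * (Nsq w₁ + Nsq w₂)) ≤ 2 * (α * z).re := by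
    have ha : 0 ≤ ‖α‖ := norm_nonneg α
    have k1 : ‖α‖ * ‖z‖ ≤
        ‖α‖ * (Real.sqrt (Nsq w₁) * (s * Real.sqrt (Nsq w₂))) :=
      mul_le_mul_of_nonneg_left hzb ha
    have k3 : (‖α‖ * s) * (2 * (Real.sqrt (Nsq w₁) * Real.sqrt (Nsq w₂))) ≤
        (‖α‖ * s) * (Nsq w₁ + Nsq w₂) :=
      mul_le_mul_of_nonneg_left h2sqrt (mul_nonneg ha hs)
    nlinarith [hre, k1, k3]
  have hQ1 := hIH w₁
  have hQ2 := hIH w₂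
  have habs := Complex.sq_norm α
  rw [hT]
  nlinarith [hQ1, hQ2, hcross, e6, Nsq_nonneg w₁, Nsq_nonneg w₂]

lemma Mmat_nsq_ge : ∀ (n : ℕ) (a : Fin n → ℂ) (γ : Fin n → Fin n → ℝ)
    (v : Fin (2 ^ n) → ℂ),
    ((∑ j, ‖a j‖ ^ 2) -
      ∑ j, ∑ k, if j < k then ‖a j‖ * ‖a k‖ * cc (γ j k) else 0) *
      Nsq v ≤ Nsq ((Mmat n a γ).mulVec v) := by
  intro n
  induction n with
  | zero =>
    intro a γ v
    simp only [Mmat, Matrix.zero_mulVec, Finset.univ_eq_empty, Finset.sum_empty, sub_zero,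
      zero_mul, Nsq]
    refine Finset.sum_nonneg fun i _ => Complex.normSq_nonneg _
  | succ n ih =>
    intro a γ v
    obtain ⟨u', hu', hU'd⟩ := Umat_isDiag n (fun j => γ j.castSucc (Fin.last n))
    set s₀ : ℝ := ∑ j : Fin n, ‖a j.castSucc‖ * cc (γ j.castSucc (Fin.last n))
      with hs₀
    have hs : 0 ≤ s₀ :=
      Finset.sum_nonneg fun j _ => mul_nonneg (norm_nonneg _) (cc_nonneg _)
    have hS : ∑ j : Fin (n + 1), ‖a j‖ ^ 2 =
        (∑ j : Fin n, ‖a j.castSucc‖ ^ 2) + ‖a (Fin.last n)‖ ^ 2 :=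
      Fin.sum_univ_castSucc _
    have hC : (∑ j : Fin (n + 1), ∑ k : Fin (n + 1),
        if j < k then ‖a j‖ * ‖a k‖ * cc (γ j k) else 0) =
        (∑ j : Fin n, ∑ k : Fin n, if j < k then
          ‖a j.castSucc‖ * ‖a k.castSucc‖ *
            cc (γ j.castSucc k.castSucc) else 0) +
          ‖a (Fin.last n)‖ * s₀ := by
      rw [Fin.sum_univ_castSucc]
      have hlast : (∑ k : Fin (n + 1), if Fin.last n < k then
          ‖a (Fin.last n)‖ * ‖a k‖ * cc (γ (Fin.last n) k) else 0)
          = 0 :=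
        Finset.sum_eq_zero fun k _ => if_neg (not_lt.mpr (Fin.le_last k))
      rw [hlast, add_zero]
      have hrow : ∀ j : Fin n, (∑ k : Fin (n + 1), if j.castSucc < k then
          ‖a j.castSucc‖ * ‖a k‖ * cc (γ j.castSucc k) else 0) =
          (∑ k : Fin n, if j < k then
            ‖a j.castSucc‖ * ‖a k.castSucc‖ *
              cc (γ j.castSucc k.castSucc) else 0) +
            ‖a j.castSucc‖ * ‖a (Fin.last n)‖ *
              cc (γ j.castSucc (Fin.last n)) := by
        intro j
        rw [Fin.sum_univ_castSucc]
        simp [Fin.castSucc_lt_castSucc_iff, Fin.castSucc_lt_last]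
      rw [Finset.sum_congr rfl fun j _ => hrow j, Finset.sum_add_distrib]
      congr 1
      rw [hs₀, Finset.mul_sum]
      exact Finset.sum_congr rfl fun j _ => by ring
    rw [hS, hC]
    have step := main_step
      (e := finSumFinEquiv.trans (finCongr (by rw [pow_succ, mul_two])))
      (Mmat n (fun j => a j.castSucc) (fun j k => γ j.castSucc k.castSucc))
      (Umat n (fun j => γ j.castSucc (Fin.last n)))
      u' hu' hU'd
      (Mmat_isHermitian n _ _)
      (a (Fin.last n)) _ _ s₀ hs
      (fun x => ih (fun j => a j.castSucc) (fun j k => γ j.castSucc k.castSucc) x)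
      (fun x => anticomm_bound n (fun j => a j.castSucc)
        (fun j k => γ j.castSucc k.castSucc) (fun j => γ j.castSucc (Fin.last n)) x)
      v
    simp only [Mmat]
    exact step

end EmatAux
open EmatAux in
/-- Lemma 2.3 (5): a lower bound on `inf_{‖v‖=1} ‖E(ε,γ)(k) v‖`. -/
theorem Emat_inf_ge (d L : ℕ) (hd : 2 ≤ d) (hL : 1 ≤ L) (t : Fin d → ℝ)
    (ht : ∀ j, 0 < t j) (ε : Fin d → ℝ) (γ : Fin d → Fin d → ℝ)
    (hΔ : 0 ≤ 1 - (1 / 2 : ℝ) *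
        ⨆ m : Fin d,
          ((∑ j : Fin d,
              if j < m then ‖1 + Complex.exp (Complex.I * (γ j m : ℂ))‖ else 0) +
            ∑ j : Fin d,
              if m < j then ‖1 + Complex.exp (Complex.I * (γ m j : ℂ))‖ else 0))
    (k : Fin d → ℝ) :
    Real.sqrt (1 - (1 / 2 : ℝ) *
        ⨆ m : Fin d,
          ((∑ j : Fin d,
              if j < m then ‖1 + Complex.exp (Complex.I * (γ j m : ℂ))‖ else 0) +
            ∑ j : Fin d,
              if m < j then ‖1 + Complex.exp (Complex.I * (γ m j : ℂ))‖ else 0)) *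
        ((1 / 2) * ⨅ j : Fin d, t j) *
        Real.sqrt (∑ l : Fin d,
          ‖1 + Complex.exp (Complex.I *
            Complex.ofReal (Real.pi / (L : ℝ) * ε l - k l))‖ ^ 2) ≤
      sInf {r : ℝ | ∃ v : EuclideanSpace ℂ (Fin (2 ^ d)),
        ‖v‖ = 1 ∧ r = ‖Matrix.toEuclideanLin (Emat d L t ε γ k) v‖} := by
  haveI : Nonempty (Fin d) := ⟨⟨0, by omega⟩⟩
  set aE : Fin d → ℂ := fun j => (t j : ℂ) *
      (1 + Complex.exp (Complex.I * Complex.ofReal (Real.pi / (L : ℝ) * ε j - k j))) *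
      (if L = 1 then (1 / 2 : ℂ) else 1) with haE
  set g : Fin d → ℝ := fun m =>
      ((∑ j : Fin d,
          if j < m then ‖1 + Complex.exp (Complex.I * (γ j m : ℂ))‖ else 0) +
        ∑ j : Fin d,
          if m < j then ‖1 + Complex.exp (Complex.I * (γ m j : ℂ))‖ else 0)
    with hgdef
  set G : ℝ := ⨆ m : Fin d, g m with hG
  set tmin : ℝ := ⨅ j : Fin d, t j with htmin
  set Ssum : ℝ := ∑ l : Fin d, ‖1 + Complex.exp (Complex.I *
      Complex.ofReal (Real.pi / (L : ℝ) * ε l - k l))‖ ^ 2 with hSsum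
  have hSsumnn : 0 ≤ Ssum := Finset.sum_nonneg fun l _ => sq_nonneg _
  have htmin0 : 0 ≤ tmin := le_ciInf fun j => (ht j).le
  have htminle : ∀ j, tmin ≤ t j := fun j => ciInf_le (Finite.bddBelow_range t) j
  have hgG : ∀ m, g m ≤ G := fun m => le_ciSup (Finite.bddAbove_range g) m
  -- abbreviations
  set x : Fin d → ℝ := fun j => ‖aE j‖ with hx
  set S : ℝ := ∑ j : Fin d, x j ^ 2 with hS
  set C : ℝ := ∑ j : Fin d, ∑ l : Fin d,
      if j < l then x j * x l * cc (γ j l) else 0 with hCdef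
  have hxnn : ∀ j, 0 ≤ x j := fun j => norm_nonneg _
  -- C ≤ (1/2) * S * G
  have hCle : C ≤ (1 / 2 : ℝ) * (S * G) := by
    have step1 : C ≤ ∑ j : Fin d, ∑ l : Fin d,
        if j < l then (x j ^ 2 + x l ^ 2) / 2 * cc (γ j l) else 0 := by
      refine Finset.sum_le_sum fun j _ => Finset.sum_le_sum fun l _ => ?_
      split
      · have h1 : x j * x l ≤ (x j ^ 2 + x l ^ 2) / 2 := by nlinarith [sq_nonneg (x j - x l)]
        exact mul_le_mul_of_nonneg_right h1 (cc_nonneg _)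
      · exact le_rfl
    have step2 : (∑ j : Fin d, ∑ l : Fin d,
        if j < l then (x j ^ 2 + x l ^ 2) / 2 * cc (γ j l) else 0) =
        (1 / 2 : ℝ) * ((∑ j : Fin d, ∑ l : Fin d, if j < l then x j ^ 2 * cc (γ j l) else 0) +
          ∑ j : Fin d, ∑ l : Fin d, if j < l then x l ^ 2 * cc (γ j l) else 0) := by
      rw [mul_add, Finset.mul_sum, Finset.mul_sum, ← Finset.sum_add_distrib]
      refine Finset.sum_congr rfl fun j _ => ?_
      rw [Finset.mul_sum, Finset.mul_sum, ← Finset.sum_add_distrib]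
      refine Finset.sum_congr rfl fun l _ => ?_
      split <;> ring
    have step3 : (∑ j : Fin d, ∑ l : Fin d, if j < l then x j ^ 2 * cc (γ j l) else 0) =
        ∑ m : Fin d, x m ^ 2 * ∑ l : Fin d, (if m < l then cc (γ m l) else 0) := by
      refine Finset.sum_congr rfl fun j _ => ?_
      rw [Finset.mul_sum]
      refine Finset.sum_congr rfl fun l _ => ?_
      split <;> ring
    have step4 : (∑ j : Fin d, ∑ l : Fin d, if j < l then x l ^ 2 * cc (γ j l) else 0) =
        ∑ m : Fin d, x m ^ 2 * ∑ j : Fin d, (if j < m then cc (γ j m) else 0) := by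
      rw [Finset.sum_comm]
      refine Finset.sum_congr rfl fun m _ => ?_
      rw [Finset.mul_sum]
      refine Finset.sum_congr rfl fun j _ => ?_
      split <;> ring
    have step5 : (∑ m : Fin d, x m ^ 2 * ∑ l : Fin d, (if m < l then cc (γ m l) else 0)) +
        (∑ m : Fin d, x m ^ 2 * ∑ j : Fin d, (if j < m then cc (γ j m) else 0)) =
        ∑ m : Fin d, x m ^ 2 * g m := by
      rw [← Finset.sum_add_distrib]
      refine Finset.sum_congr rfl fun m _ => ?_
      rw [hgdef]
      simp only [cc]
      ring
    have step6 : (∑ m : Fin d, x m ^ 2 * g m) ≤ ∑ m : Fin d, x m ^ 2 * G :=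
      Finset.sum_le_sum fun m _ => mul_le_mul_of_nonneg_left (hgG m) (sq_nonneg _)
    have step7 : (∑ m : Fin d, x m ^ 2 * G) = S * G := by
      rw [hS, Finset.sum_mul]
    calc C ≤ _ := step1
      _ = _ := step2
      _ ≤ (1 / 2 : ℝ) * (S * G) := by
          rw [step3, step4]
          have := step5
          nlinarith [step6, step7, step5]
  -- S ≥ (tmin/2)^2 * Ssum
  have hSge : ((1 / 2 : ℝ) * tmin) ^ 2 * Ssum ≤ S := by
    rw [hS, hSsum, Finset.mul_sum]
    refine Finset.sum_le_sum fun l _ => ?_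
    set B : ℝ := ‖1 + Complex.exp (Complex.I *
        Complex.ofReal (Real.pi / (L : ℝ) * ε l - k l))‖ with hB
    have hBnn : 0 ≤ B := norm_nonneg _
    set Cf : ℝ := ‖(if L = 1 then (1 / 2 : ℂ) else 1)‖ with hCf
    have hCfnn : 0 ≤ Cf := norm_nonneg _
    have hCfge : (1 / 2 : ℝ) ≤ Cf := by
      rw [hCf]
      split
      · rw [norm_div, norm_one, Complex.norm_two]
      · rw [norm_one]; norm_num
    have hxl : x l = t l * B * Cf := by
      simp only [hx, haE]
      rw [hB, hCf, norm_mul, norm_mul, Complex.norm_real, Real.norm_eq_abs, abs_of_pos (ht l)]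
    have ht2 : tmin ^ 2 ≤ t l ^ 2 := by nlinarith [htminle l, htmin0]
    have hC2 : (1 / 2 : ℝ) ^ 2 ≤ Cf ^ 2 := by nlinarith [hCfge, hCfnn]
    rw [hxl]
    have expand : (t l * B * Cf) ^ 2 = t l ^ 2 * B ^ 2 * Cf ^ 2 := by ring
    rw [expand]
    nlinarith [ht2, hC2, sq_nonneg B, sq_nonneg tmin, sq_nonneg (t l),
      mul_nonneg (sq_nonneg (t l)) (sq_nonneg B)]
  -- lower bound each element of the set
  refine le_csInf ?_ ?_
  · refine ⟨‖Matrix.toEuclideanLin (Emat d L t ε γ k)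
        (EuclideanSpace.single (0 : Fin (2 ^ d)) (1 : ℂ))‖,
      EuclideanSpace.single (0 : Fin (2 ^ d)) (1 : ℂ), ?_, rfl⟩
    rw [EuclideanSpace.norm_single, norm_one]
  · rintro r ⟨v, hv, rfl⟩
    set vf : Fin (2 ^ d) → ℂ := (WithLp.equiv 2 (Fin (2 ^ d) → ℂ)) v with hvf
    have hnormv : Nsq vf = 1 := by
      have h : ‖v‖ = Real.sqrt (Nsq vf) := norm_toE vf
      rw [hv] at h
      exact Real.sqrt_eq_one.mp h.symm
    have hEnorm : ‖Matrix.toEuclideanLin (Emat d L t ε γ k) v‖ =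
        Real.sqrt (Nsq ((Emat d L t ε γ k).mulVec vf)) := by
      rw [Matrix.toEuclideanLin_apply]
      exact norm_toE _
    rw [hEnorm]
    have hquad := Mmat_nsq_ge d aE (fun j l => -γ j l) vf
    have hccneg : (∑ j : Fin d, ∑ l : Fin d,
        if j < l then ‖aE j‖ * ‖aE l‖ * cc ((-γ j l)) else 0) = C := by
      rw [hCdef]
      exact Finset.sum_congr rfl fun j _ => Finset.sum_congr rfl fun l _ => by
        rw [cc_neg]
    have hquad' : (S - C) * 1 ≤ Nsq ((Emat d L t ε γ k).mulVec vf) := by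
      rw [← hnormv, ← hccneg]
      exact hquad
    have hSC : (1 - (1 / 2 : ℝ) * G) * S ≤ S - C := by linarith [hCle]
    have hkey : (Real.sqrt (1 - (1 / 2 : ℝ) * G) * ((1 / 2) * tmin) * Real.sqrt Ssum) ^ 2 ≤
        Nsq ((Emat d L t ε γ k).mulVec vf) := by
      have hexp : (Real.sqrt (1 - (1 / 2 : ℝ) * G) * ((1 / 2) * tmin) * Real.sqrt Ssum) ^ 2 =
          (1 - (1 / 2 : ℝ) * G) * (((1 / 2 : ℝ) * tmin) ^ 2 * Ssum) := by
        rw [mul_pow, mul_pow, Real.sq_sqrt hΔ, Real.sq_sqrt hSsumnn]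
        ring
      rw [hexp]
      have h1 : (1 - (1 / 2 : ℝ) * G) * (((1 / 2 : ℝ) * tmin) ^ 2 * Ssum) ≤
          (1 - (1 / 2 : ℝ) * G) * S := mul_le_mul_of_nonneg_left hSge hΔ
      calc (1 - (1 / 2 : ℝ) * G) * (((1 / 2 : ℝ) * tmin) ^ 2 * Ssum)
          ≤ (1 - (1 / 2 : ℝ) * G) * S := h1
        _ ≤ S - C := hSC
        _ = (S - C) * 1 := by ring
        _ ≤ _ := hquad'
    have hLHSnn : 0 ≤ Real.sqrt (1 - (1 / 2 : ℝ) * G) * ((1 / 2) * tmin) * Real.sqrt Ssum :=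
      mul_nonneg (mul_nonneg (Real.sqrt_nonneg _) (by linarith)) (Real.sqrt_nonneg _)
    calc Real.sqrt (1 - (1 / 2 : ℝ) * G) * ((1 / 2) * tmin) * Real.sqrt Ssum
        = Real.sqrt ((Real.sqrt (1 - (1 / 2 : ℝ) * G) * ((1 / 2) * tmin) *
            Real.sqrt Ssum) ^ 2) := (Real.sqrt_sq hLHSnn).symm
      _ ≤ Real.sqrt (Nsq ((Emat d L t ε γ k).mulVec vf)) := Real.sqrt_le_sqrt hkey
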